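/- Let a_1,…,a_N ∈ R^n be unit ℓ2-norm vectors with μ = max_{i≠j}|⟨a_i,a_j⟩|, let x ∈ R^N be supported on Λ with nonzero magnitudes between |x_min| and |x_max|, assume for every i ∈ Λ that |{j ∈ Λ : ⟨a_i, a_j⟩ ≠ 0}| ≤ S, and let v ∈ R^n satisfy |⟨a_i, v⟩| ≤ ζ for every i ∈ Λ. Let ε_1,…,ε_N be i.i.d. uniform on {−1,+1} and set y = Σ_{j∈Λ} ε_j x_j a_j + v. Then for every p with 0 < p ≤ |x_min|, P( min_{i ∈ Λ} |⟨ε_i a_i, y⟩| < p ) ≤ 2 |Λ| · exp( −(|x_min| − p)² / (2 (|x_max|² S μ² + ζ²)) ). -/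

import Mathlib

open MeasureTheory ProbabilityTheory

open Real Finset in
lemma rademacher_exp_integral {Ω : Type*} [MeasurableSpace Ω] (P : Measure Ω)
    [IsProbabilityMeasure P] {X : Ω → ℝ} (hm : Measurable X)
    (h1 : P {ω | X ω = 1} = 1 / 2) (h2 : P {ω | X ω = -1} = 1 / 2) (c : ℝ) :
    ∫ ω, Real.exp (c * X ω) ∂P = Real.cosh c := by
  set A : Set Ω := {ω | X ω = 1} with hA
  set B : Set Ω := {ω | X ω = -1} with hB
  have hAm : MeasurableSet A := hm (measurableSet_singleton 1)
  have hBm : MeasurableSet B := hm (measurableSet_singleton (-1))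
  have hdisj : Disjoint A B := by
    rw [Set.disjoint_left]
    rintro ω (h1 : X ω = 1) (h2 : X ω = -1)
    rw [h1] at h2; norm_num at h2
  have hunion : P (A ∪ B) = 1 := by
    rw [measure_union hdisj hBm, h1, h2]
    norm_num
    rw [ENNReal.inv_two_add_inv_two]
  have hae : ∀ᵐ ω ∂P, ω ∈ A ∪ B := by
    have : P (A ∪ B)ᶜ = 0 := by
      rw [measure_compl (hAm.union hBm) (measure_ne_top _ _), hunion, measure_univ, tsub_self]
    exact (ae_iff.2 this)
  have hcong : (fun ω => Real.exp (c * X ω)) =ᵐ[P]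
      (A.indicator (fun _ => Real.exp c) + B.indicator (fun _ => Real.exp (-c))) := by
    filter_upwards [hae] with ω hω
    rcases hω with hω | hω
    · have hX : X ω = 1 := hω
      have hnB : ω ∉ B := by simp [hB, hX]; norm_num
      simp [Set.indicator_of_mem hω, Set.indicator_of_notMem hnB, hX]
    · have hX : X ω = -1 := hω
      have hnA : ω ∉ A := by simp [hA, hX]; norm_num
      simp [Set.indicator_of_mem hω, Set.indicator_of_notMem hnA, hX]
  rw [integral_congr_ae hcong]
  simp_rw [Pi.add_apply]
  rw [integral_add
      ((integrable_const _).indicator hAm) ((integrable_const _).indicator hBm),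
    integral_indicator hAm, integral_indicator hBm, setIntegral_const, setIntegral_const,
    measureReal_def, measureReal_def, h1, h2, Real.cosh_eq]
  simp [ENNReal.toReal_div]
  ring
open MeasureTheory ProbabilityTheory Real Finset

lemma rademacher_ae_pm {Ω : Type*} [MeasurableSpace Ω] (P : Measure Ω)
    [IsProbabilityMeasure P] {X : Ω → ℝ} (hm : Measurable X)
    (h1 : P {ω | X ω = 1} = 1 / 2) (h2 : P {ω | X ω = -1} = 1 / 2) :
    ∀ᵐ ω ∂P, X ω = 1 ∨ X ω = -1 := by
  have hAm : MeasurableSet {ω | X ω = 1} := hm (measurableSet_singleton 1)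
  have hBm : MeasurableSet {ω | X ω = -1} := hm (measurableSet_singleton (-1))
  have hdisj : Disjoint {ω | X ω = 1} {ω | X ω = -1} := by
    rw [Set.disjoint_left]
    rintro ω (ha : X ω = 1) (hb : X ω = -1)
    rw [ha] at hb; norm_num at hb
  have hunion : P ({ω | X ω = 1} ∪ {ω | X ω = -1}) = 1 := by
    rw [measure_union hdisj hBm, h1, h2]
    norm_num
    rw [ENNReal.inv_two_add_inv_two]
  have hnull : P ({ω | X ω = 1} ∪ {ω | X ω = -1})ᶜ = 0 := by
    rw [measure_compl (hAm.union hBm) (measure_ne_top _ _), hunion, measure_univ, tsub_self]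
  exact ae_iff.2 hnull

lemma rademacher_sum_tail {Ω : Type*} [MeasurableSpace Ω] (P : Measure Ω)
    [IsProbabilityMeasure P] {N : ℕ} (ε : Fin N → Ω → ℝ)
    (hmeas : ∀ i, Measurable (ε i))
    (hindep : iIndepFun ε P)
    (hdist : ∀ i, P {ω | ε i ω = 1} = 1 / 2 ∧ P {ω | ε i ω = -1} = 1 / 2)
    (β : Fin N → ℝ) (s : Finset (Fin N)) (b r σ2 : ℝ) (hr : 0 ≤ r)
    (hσ : (∑ j ∈ s, β j ^ 2) + b ^ 2 ≤ σ2) :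
    P {ω | r ≤ |(∑ j ∈ s, ε j ω * β j) + b|} ≤
      ENNReal.ofReal (2 * Real.exp (-(r ^ 2) / (2 * σ2))) := by
  have hσ0 : 0 ≤ σ2 := le_trans (by positivity) hσ
  set lam := r / σ2 with hlam
  have hlam0 : 0 ≤ lam := div_nonneg hr hσ0
  set X : Fin N → Ω → ℝ := fun j ω => ε j ω * β j with hX
  have hXmeas : ∀ j, Measurable (X j) := fun j => (hmeas j).mul_const _
  have hXindep : iIndepFun X P :=
    hindep.comp (fun j x => x * β j) (fun j => measurable_id.mul_const _)
  have hmgf : ∀ (u : ℝ) (j : Fin N), mgf (X j) P u = Real.cosh (u * β j) := by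
    intro u j
    have h := rademacher_exp_integral P (hmeas j) (hdist j).1 (hdist j).2 (u * β j)
    rw [mgf, ← h]
    congr 1; ext ω; simp only [hX]; ring_nf
  have hint : ∀ (u : ℝ) (j : Fin N), Integrable (fun ω => Real.exp (u * X j ω)) P := by
    intro u j
    refine (integrable_const (Real.exp |u * β j|)).mono'
      (((hXmeas j).const_mul u).exp.aestronglyMeasurable) ?_
    filter_upwards [rademacher_ae_pm P (hmeas j) (hdist j).1 (hdist j).2] with ω hω
    rw [Real.norm_eq_abs, Real.abs_exp]
    apply Real.exp_le_exp.2
    rcases hω with hω | hω <;> simp only [hX, hω] <;>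
      nlinarith [le_abs_self (u * β j), neg_abs_le (u * β j)]
  have hmgfsum : ∀ u : ℝ, mgf (∑ j ∈ s, X j) P u ≤
      Real.exp (u ^ 2 * (∑ j ∈ s, β j ^ 2) / 2) := by
    intro u
    rw [hXindep.mgf_sum hXmeas]
    calc ∏ j ∈ s, mgf (X j) P u ≤ ∏ j ∈ s, Real.exp (u ^ 2 * β j ^ 2 / 2) := by
          refine Finset.prod_le_prod (fun j _ => mgf_nonneg) (fun j _ => ?_)
          rw [hmgf u j]
          simpa [mul_pow] using Real.cosh_le_exp_half_sq (u * β j)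
      _ = Real.exp (u ^ 2 * (∑ j ∈ s, β j ^ 2) / 2) := by
          rw [← Real.exp_sum]
          congr 1
          rw [Finset.mul_sum, Finset.sum_div]
  have hintsum : ∀ u : ℝ, Integrable (fun ω => Real.exp (u * (∑ j ∈ s, X j) ω)) P :=
    fun u => hXindep.integrable_exp_mul_sum hXmeas (fun j _ => hint u j)
  have key1 : (P {ω | r - b ≤ (∑ j ∈ s, X j) ω}).toReal ≤
      Real.exp (-lam * (r - b)) * Real.exp (lam ^ 2 * (∑ j ∈ s, β j ^ 2) / 2) :=
    (measure_ge_le_exp_mul_mgf (r - b) hlam0 (hintsum lam)).trans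
      (mul_le_mul_of_nonneg_left (hmgfsum lam) (Real.exp_nonneg _))
  have key2 : (P {ω | (∑ j ∈ s, X j) ω ≤ -r - b}).toReal ≤
      Real.exp (lam * (-r - b)) * Real.exp (lam ^ 2 * (∑ j ∈ s, β j ^ 2) / 2) := by
    have := (measure_le_le_exp_mul_mgf (μ := P) (X := ∑ j ∈ s, X j) (t := -lam) (-r - b)
      (neg_nonpos.2 hlam0) (hintsum (-lam)))
    refine this.trans ?_
    rw [neg_neg]
    exact mul_le_mul_of_nonneg_left (by simpa [neg_sq] using hmgfsum (-lam))
      (Real.exp_nonneg _)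
  -- inclusion of events
  have hsub : {ω | r ≤ |(∑ j ∈ s, ε j ω * β j) + b|} ⊆
      {ω | r - b ≤ (∑ j ∈ s, X j) ω} ∪ {ω | (∑ j ∈ s, X j) ω ≤ -r - b} := by
    intro ω hω
    simp only [Set.mem_setOf_eq] at hω
    rcases le_abs.1 hω with h | h <;>
      simp only [Set.mem_union, Set.mem_setOf_eq, Finset.sum_apply, hX] <;>
      [left; right] <;> linarith
  -- numeric bound on the sum of the two tail bounds
  have hnum : Real.exp (-lam * (r - b)) * Real.exp (lam ^ 2 * (∑ j ∈ s, β j ^ 2) / 2) +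
      Real.exp (lam * (-r - b)) * Real.exp (lam ^ 2 * (∑ j ∈ s, β j ^ 2) / 2) ≤
      2 * Real.exp (-(r ^ 2) / (2 * σ2)) := by
    have hcosh : Real.exp (-lam * (r - b)) + Real.exp (lam * (-r - b)) =
        2 * Real.exp (-lam * r) * Real.cosh (lam * b) := by
      rw [show -lam * (r - b) = -lam * r + lam * b by ring,
        show lam * (-r - b) = -lam * r + -(lam * b) by ring,
        Real.exp_add, Real.exp_add, Real.cosh_eq]
      ring
    have h1 : Real.exp (-lam * (r - b)) * Real.exp (lam ^ 2 * (∑ j ∈ s, β j ^ 2) / 2) +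
        Real.exp (lam * (-r - b)) * Real.exp (lam ^ 2 * (∑ j ∈ s, β j ^ 2) / 2) =
        2 * Real.exp (-lam * r) * Real.cosh (lam * b) *
          Real.exp (lam ^ 2 * (∑ j ∈ s, β j ^ 2) / 2) := by
      rw [← add_mul, hcosh]
    rw [h1]
    have h2 : Real.cosh (lam * b) ≤ Real.exp (lam ^ 2 * b ^ 2 / 2) := by
      simpa [mul_pow] using Real.cosh_le_exp_half_sq (lam * b)
    calc 2 * Real.exp (-lam * r) * Real.cosh (lam * b) *
          Real.exp (lam ^ 2 * (∑ j ∈ s, β j ^ 2) / 2)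
        ≤ 2 * Real.exp (-lam * r) * Real.exp (lam ^ 2 * b ^ 2 / 2) *
          Real.exp (lam ^ 2 * (∑ j ∈ s, β j ^ 2) / 2) :=
          mul_le_mul_of_nonneg_right
            (mul_le_mul_of_nonneg_left h2 (by positivity)) (Real.exp_nonneg _)
      _ = 2 * Real.exp (-lam * r + lam ^ 2 * ((∑ j ∈ s, β j ^ 2) + b ^ 2) / 2) := by
          rw [mul_assoc, mul_assoc, ← Real.exp_add, ← Real.exp_add]
          congr 1
          ring
      _ ≤ 2 * Real.exp (-lam * r + lam ^ 2 * σ2 / 2) :=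
          mul_le_mul_of_nonneg_left
            (Real.exp_le_exp.2 (by nlinarith [sq_nonneg lam])) (by norm_num)
      _ = 2 * Real.exp (-(r ^ 2) / (2 * σ2)) := by
          congr 1
          rcases eq_or_lt_of_le hσ0 with hz | hz
          · rw [hlam, ← hz]
            simp
          · rw [hlam]
            field_simp
            ring
  -- put everything together in ℝ≥0∞
  calc P {ω | r ≤ |(∑ j ∈ s, ε j ω * β j) + b|}
      ≤ P {ω | r - b ≤ (∑ j ∈ s, X j) ω} + P {ω | (∑ j ∈ s, X j) ω ≤ -r - b} :=
        le_trans (measure_mono hsub) (measure_union_le _ _)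
    _ ≤ ENNReal.ofReal (Real.exp (-lam * (r - b)) *
          Real.exp (lam ^ 2 * (∑ j ∈ s, β j ^ 2) / 2)) +
        ENNReal.ofReal (Real.exp (lam * (-r - b)) *
          Real.exp (lam ^ 2 * (∑ j ∈ s, β j ^ 2) / 2)) := by
        gcongr
        · exact (ENNReal.le_ofReal_iff_toReal_le (measure_ne_top _ _) (by positivity)).2 key1
        · exact (ENNReal.le_ofReal_iff_toReal_le (measure_ne_top _ _) (by positivity)).2 key2
    _ = ENNReal.ofReal (Real.exp (-lam * (r - b)) *
          Real.exp (lam ^ 2 * (∑ j ∈ s, β j ^ 2) / 2) +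
          Real.exp (lam * (-r - b)) * Real.exp (lam ^ 2 * (∑ j ∈ s, β j ^ 2) / 2)) :=
        (ENNReal.ofReal_add (by positivity) (by positivity)).symm
    _ ≤ ENNReal.ofReal (2 * Real.exp (-(r ^ 2) / (2 * σ2))) :=
        ENNReal.ofReal_le_ofReal hnum


/-- Rademacher concentration for the minimal on-support
correlation: for `y = Σ_{j∈Λ} ε_j x_j a_j + v` and `0 < p ≤ |x_min|`, the
probability that `min_{i∈Λ} |⟨ε_i a_i, y⟩| < p` is at most
`2 |Λ| exp(−(|x_min| − p)²/(2(|x_max|² S μ² + ζ²)))`. -/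
theorem on_support_correlation_min
    {Ω : Type*} [MeasurableSpace Ω] (P : Measure Ω) [IsProbabilityMeasure P]
    (n N : ℕ)
    -- unit ℓ2-norm vectors `a_1, …, a_N ∈ ℝ^n`
    (a : Fin N → Fin n → ℝ)
    (ha : ∀ j, ∑ t, a j t ^ 2 = 1)
    -- mutual coherence `μ`
    (μ : ℝ) (hμ0 : 0 ≤ μ)
    (hμ : ∀ i j, i ≠ j → |∑ t, a i t * a j t| ≤ μ)
    -- `x` supported on `Λ`, nonzero magnitudes between `x_min` and `x_max`
    (Λ : Finset (Fin N)) (x : Fin N → ℝ)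
    (hsupp : ∀ i, x i ≠ 0 → i ∈ Λ)
    (xmin xmax : ℝ)
    (hxmin : ∀ i ∈ Λ, xmin ≤ |x i|) (hxmax : ∀ i ∈ Λ, |x i| ≤ xmax)
    -- overlap bound at every on-support index
    (S : ℕ)
    (hS : ∀ i ∈ Λ, Set.ncard {j | j ∈ Λ ∧ (∑ t, a i t * a j t) ≠ 0} ≤ S)
    -- noise
    (v : Fin n → ℝ) (ζ : ℝ) (hv : ∀ i ∈ Λ, |∑ t, a i t * v t| ≤ ζ)
    -- i.i.d. Rademacher signs
    (ε : Fin N → Ω → ℝ)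
    (hmeas : ∀ i, Measurable (ε i))
    (hindep : iIndepFun ε P)
    (hdist : ∀ i, P {ω | ε i ω = 1} = 1 / 2 ∧ P {ω | ε i ω = -1} = 1 / 2)
    (p : ℝ) (hp0 : 0 < p) (hpmin : p ≤ xmin) :
    P {ω | ∃ i ∈ Λ,
        |ε i ω * ∑ t, a i t * ((∑ j ∈ Λ, ε j ω * x j * a j t) + v t)| < p} ≤
      ENNReal.ofReal (2 * Λ.card *
        Real.exp (-((xmin - p) ^ 2) / (2 * (xmax ^ 2 * S * μ ^ 2 + ζ ^ 2)))) := by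
    classical
  rcases Λ.eq_empty_or_nonempty with hΛ | ⟨i0, hi0⟩
  · have : {ω : Ω | ∃ i ∈ Λ,
        |ε i ω * ∑ t, a i t * ((∑ j ∈ Λ, ε j ω * x j * a j t) + v t)| < p} = ∅ := by
      rw [hΛ]; simp
    rw [this, measure_empty]
    exact bot_le
  have hζ0 : 0 ≤ ζ := le_trans (abs_nonneg _) (hv i0 hi0)
  set c : Fin N → Fin N → ℝ := fun i j => ∑ t, a i t * a j t with hc
  have hcii : ∀ i, c i i = 1 := fun i => by
    rw [hc]; simpa [sq] using ha i
  set b : Fin N → ℝ := fun i => ∑ t, a i t * v t with hb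
  set r := xmin - p with hrdef
  have hr : 0 ≤ r := by simp [hrdef]; linarith
  set σ2 := xmax ^ 2 * S * μ ^ 2 + ζ ^ 2 with hσ2
  -- rewrite the inner product
  have hinner : ∀ (i : Fin N) (ω : Ω),
      (∑ t, a i t * ((∑ j ∈ Λ, ε j ω * x j * a j t) + v t)) =
      (∑ j ∈ Λ, ε j ω * (x j * c i j)) + b i := by
    intro i ω
    simp_rw [mul_add, Finset.sum_add_distrib]
    congr 1
    simp_rw [Finset.mul_sum]
    rw [Finset.sum_comm]
    refine Finset.sum_congr rfl fun j _ => ?_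
    rw [hc, Finset.mul_sum, Finset.mul_sum]
    exact Finset.sum_congr rfl fun t _ => by ring
  -- the union-bound target sets
  set T : Fin N → Set Ω :=
    fun i => {ω | r ≤ |(∑ j ∈ Λ.erase i, ε j ω * (x j * c i j)) + b i|} with hT
  set G : Set Ω := {ω | ∀ j, ε j ω = 1 ∨ ε j ω = -1} with hG
  have hGnull : P Gᶜ = 0 := by
    have haes : ∀ᵐ ω ∂P, ∀ j, ε j ω = 1 ∨ ε j ω = -1 :=
      ae_all_iff.2 fun j => rademacher_ae_pm P (hmeas j) (hdist j).1 (hdist j).2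
    rw [ae_iff] at haes
    simpa [hG, Set.compl_setOf] using haes
  -- event inclusion
  have hsub : {ω : Ω | ∃ i ∈ Λ,
      |ε i ω * ∑ t, a i t * ((∑ j ∈ Λ, ε j ω * x j * a j t) + v t)| < p} ⊆
      (⋃ i ∈ Λ, T i) ∪ Gᶜ := by
    rintro ω ⟨i, hiΛ, hlt⟩
    by_cases hωG : ω ∈ G
    · left
      refine Set.mem_biUnion hiΛ ?_
      have hεi : |ε i ω| = 1 := by
        rcases hωG i with h | h <;> rw [h] <;> simp
      rw [hinner i ω] at hlt
      have hsplit : ∑ j ∈ Λ, ε j ω * (x j * c i j) =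
          (∑ j ∈ Λ.erase i, ε j ω * (x j * c i j)) + ε i ω * (x i * c i i) :=
        (Finset.sum_erase_add Λ _ hiΛ).symm
      rw [hsplit, hcii i, mul_one] at hlt
      set V := (∑ j ∈ Λ.erase i, ε j ω * (x j * c i j)) + b i with hV
      have hlt' : |ε i ω| * |V + ε i ω * x i| < p := by
        rw [← abs_mul]
        have e : ε i ω * (V + ε i ω * x i) =
            ε i ω * (∑ j ∈ Λ.erase i, ε j ω * (x j * c i j) + ε i ω * x i + b i) := by
          rw [hV]; ring
        rw [e]; exact hlt
      rw [hεi, one_mul] at hlt'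
      have hxi : xmin ≤ |ε i ω * x i| := by
        rw [abs_mul, hεi, one_mul]
        exact hxmin i hiΛ
      have habs : |ε i ω * x i| - |V + ε i ω * x i| ≤ |V| := by
        have := abs_sub_abs_le_abs_sub (ε i ω * x i) (V + ε i ω * x i)
        have heq : |ε i ω * x i - (V + ε i ω * x i)| = |V| := by
          rw [show ε i ω * x i - (V + ε i ω * x i) = -V by ring, abs_neg]
        linarith
      show r ≤ |(∑ j ∈ Λ.erase i, ε j ω * (x j * c i j)) + b i|
      rw [← hV]
      rw [hrdef]
      linarith
    · right
      exact hωG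
  -- per-index variance bound
  have hσi : ∀ i ∈ Λ, (∑ j ∈ Λ.erase i, (x j * c i j) ^ 2) + (b i) ^ 2 ≤ σ2 := by
    intro i hiΛ
    have hb2 : b i ^ 2 ≤ ζ ^ 2 := by
      have h1 := hv i hiΛ
      nlinarith [sq_abs (b i), abs_nonneg (b i)]
    have hcard : ((Λ.erase i).filter fun j => c i j ≠ 0).card ≤ S := by
      have h1 : ((Λ.erase i).filter fun j => c i j ≠ 0) ⊆
          Λ.filter fun j => c i j ≠ 0 :=
        Finset.filter_subset_filter _ (Finset.erase_subset i Λ)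
      have h2 : {j | j ∈ Λ ∧ (∑ t, a i t * a j t) ≠ 0} =
          ↑(Λ.filter fun j => c i j ≠ 0) := by
        ext j
        simp [hc, Finset.mem_filter]
      have h3 := hS i hiΛ
      rw [h2, Set.ncard_coe_finset] at h3
      exact le_trans (Finset.card_le_card h1) h3
    have hsum : ∑ j ∈ Λ.erase i, (x j * c i j) ^ 2 ≤ (S : ℝ) * (xmax ^ 2 * μ ^ 2) := by
      have hfe : ∑ j ∈ (Λ.erase i).filter (fun j => c i j ≠ 0), (x j * c i j) ^ 2 =
          ∑ j ∈ Λ.erase i, (x j * c i j) ^ 2 := by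
        refine Finset.sum_filter_of_ne fun j _ hne => ?_
        intro h0
        exact hne (by rw [h0]; ring)
      rw [← hfe]
      have hterm : ∀ j ∈ (Λ.erase i).filter (fun j => c i j ≠ 0),
          (x j * c i j) ^ 2 ≤ xmax ^ 2 * μ ^ 2 := by
        intro j hj
        rw [Finset.mem_filter] at hj
        have hjΛ : j ∈ Λ := Finset.mem_of_mem_erase hj.1
        have hji : j ≠ i := Finset.ne_of_mem_erase hj.1
        have h1 : |x j| ≤ xmax := hxmax j hjΛ
        have h2 : |c i j| ≤ μ := hμ i j (Ne.symm hji)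
        have h3 : |x j * c i j| ≤ xmax * μ := by
          rw [abs_mul]
          exact mul_le_mul h1 h2 (abs_nonneg _) (le_trans (abs_nonneg _) h1)
        calc (x j * c i j) ^ 2 = |x j * c i j| ^ 2 := (sq_abs _).symm
          _ ≤ (xmax * μ) ^ 2 := pow_le_pow_left₀ (abs_nonneg _) h3 2
          _ = xmax ^ 2 * μ ^ 2 := by ring
      calc ∑ j ∈ (Λ.erase i).filter (fun j => c i j ≠ 0), (x j * c i j) ^ 2
          ≤ ((Λ.erase i).filter (fun j => c i j ≠ 0)).card * (xmax ^ 2 * μ ^ 2) := by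
            simpa using Finset.sum_le_card_nsmul _ _ _ hterm
        _ ≤ (S : ℝ) * (xmax ^ 2 * μ ^ 2) := by
            have : (((Λ.erase i).filter fun j => c i j ≠ 0).card : ℝ) ≤ (S : ℝ) := by
              exact_mod_cast hcard
            have hnn : (0:ℝ) ≤ xmax ^ 2 * μ ^ 2 := by positivity
            exact mul_le_mul_of_nonneg_right this hnn
    rw [hσ2]
    nlinarith [hsum, hb2]
  -- tail bound for each index
  have htail : ∀ i ∈ Λ, P (T i) ≤ ENNReal.ofReal (2 * Real.exp (-(r ^ 2) / (2 * σ2))) := by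
    intro i hiΛ
    exact rademacher_sum_tail P ε hmeas hindep hdist (fun j => x j * c i j)
      (Λ.erase i) (b i) r σ2 hr (hσi i hiΛ)
  -- put it together
  calc P {ω : Ω | ∃ i ∈ Λ,
      |ε i ω * ∑ t, a i t * ((∑ j ∈ Λ, ε j ω * x j * a j t) + v t)| < p}
      ≤ P ((⋃ i ∈ Λ, T i) ∪ Gᶜ) := measure_mono hsub
    _ ≤ P (⋃ i ∈ Λ, T i) + P Gᶜ := measure_union_le _ _
    _ = P (⋃ i ∈ Λ, T i) := by rw [hGnull, add_zero]
    _ ≤ ∑ i ∈ Λ, P (T i) := measure_biUnion_finset_le _ _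
    _ ≤ ∑ i ∈ Λ, ENNReal.ofReal (2 * Real.exp (-(r ^ 2) / (2 * σ2))) :=
        Finset.sum_le_sum htail
    _ = Λ.card * ENNReal.ofReal (2 * Real.exp (-(r ^ 2) / (2 * σ2))) := by
        rw [Finset.sum_const, nsmul_eq_mul]
    _ = ENNReal.ofReal (2 * Λ.card * Real.exp (-(r ^ 2) / (2 * σ2))) := by
        rw [← ENNReal.ofReal_natCast Λ.card, ← ENNReal.ofReal_mul (by positivity)]
        congr 1
        ring
    _ = ENNReal.ofReal (2 * Λ.card *
        Real.exp (-((xmin - p) ^ 2) / (2 * (xmax ^ 2 * S * μ ^ 2 + ζ ^ 2)))) := by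
        rw [hrdef, hσ2]
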